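/- (Explicit form.) For every (t,x) ∈ ℕ × ∂B with t ≥ 1 and every function f : ℤ^d → ℝ vanishing outside B, one has N f(x − t e_d) = Σ_{(s,y)∈S(t,x)} c_{t,x}(s,y) f(y + s e_d), where c_{t,x}(s,y) = [∏_{(l,w)∈S(t,x)} P(Z^w_l = w − l e_d)]^{−1} · Σ_{σ∈Sym(S(t,x))} sgn(σ) · P(Z^{σ₂(t,x)}_{σ₁(t,x)} = y + s e_d) · ∏_{(h,z)∈S(t,x)∖{(t,x)}} P(Z^{σ₂(h,z)}_{σ₁(h,z)} = z − h e_d), and where σ(s,y) = (σ₁(s,y), σ₂(s,y)) for a permutation σ of S(t,x). (The denominator ∏_{(l,w)∈S(t,x)} P(Z^w_l = w − l e_d) is strictly positive, so c_{t,x} is well defined.) -/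

import Mathlib

open Finset

/-- The `i`-th standard unit vector `e_i` in `ℤ^(d+1)`. -/
def unitVec (d : ℕ) (i : Fin (d + 1)) : Fin (d + 1) → ℤ := Pi.single i 1

/-- The ℓ¹-norm `‖v‖₁ = ∑ i, |v i|` on `ℤ^(d+1)`. -/
def norm1 {d : ℕ} (v : Fin (d + 1) → ℤ) : ℤ := ∑ i, |v i|

/-- `P t x z` represents the `t`-step transition probability `P(Z^x_t = z)` of a
time-homogeneous Markov chain on `ℤ^(d+1)` which at each step moves by `± e_i`,
with all `2(d+1)` one-step probabilities strictly positive and summing to `1`. -/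
structure IsRandomWalk (d : ℕ)
    (P : ℕ → (Fin (d + 1) → ℤ) → (Fin (d + 1) → ℤ) → ℝ) : Prop where
  nonneg : ∀ t x z, 0 ≤ P t x z
  init : ∀ x z, P 0 x z = if z = x then 1 else 0
  step : ∀ t x z, P (t + 1) x z =
      ∑ i, P 1 x (x + unitVec d i) * P t (x + unitVec d i) z
        + ∑ i, P 1 x (x - unitVec d i) * P t (x - unitVec d i) z
  sum_one : ∀ x, (∑ i, P 1 x (x + unitVec d i)) + (∑ i, P 1 x (x - unitVec d i)) = 1
  pos_add : ∀ x i, 0 < P 1 x (x + unitVec d i)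
  pos_sub : ∀ x i, 0 < P 1 x (x - unitVec d i)

/-- The expectation `E[h(Z^x_t)]` (the law of `Z^x_t` has finite support). -/
noncomputable def expect {d : ℕ} (P : ℕ → (Fin (d + 1) → ℤ) → (Fin (d + 1) → ℤ) → ℝ)
    (t : ℕ) (x : Fin (d + 1) → ℤ) (h : (Fin (d + 1) → ℤ) → ℝ) : ℝ :=
  ∑ᶠ z, h z * P t x z

/-- The finite set `S(t,x) = {(s,y) ∈ ℕ × ∂B : 1 ≤ s ≤ t, ‖y − x‖₁ ≤ t − s,
and t − s − ‖y − x‖₁ is even}`. -/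
noncomputable def Sset (d t : ℕ) (x : Fin (d + 1) → ℤ) : Finset (ℕ × (Fin (d + 1) → ℤ)) :=
  ((Finset.Icc 1 t) ×ˢ (Fintype.piFinset fun i => Finset.Icc (x i - t) (x i + t))).filter
    (fun p => p.2 (Fin.last d) = 0 ∧ norm1 (p.2 - x) ≤ (t : ℤ) - p.1 ∧
      Even ((t : ℤ) - p.1 - norm1 (p.2 - x)))

/-- The matrix `W^+_{t,x}`, with entries `(W^+)_{(s,y),(u,z)} = P(Z^y_s = z + u e_d)`. -/
noncomputable def Wplus {d : ℕ} (P : ℕ → (Fin (d + 1) → ℤ) → (Fin (d + 1) → ℤ) → ℝ)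
    (t : ℕ) (x : Fin (d + 1) → ℤ) :
    Matrix {p // p ∈ Sset d t x} {p // p ∈ Sset d t x} ℝ :=
  fun p q => P p.1.1 p.1.2 (q.1.2 + Pi.single (Fin.last d) (q.1.1 : ℤ))

/-- The matrix `W^-_{t,x}`, with entries `(W^-)_{(s,y),(u,z)} = P(Z^y_s = z - u e_d)`. -/
noncomputable def Wminus {d : ℕ} (P : ℕ → (Fin (d + 1) → ℤ) → (Fin (d + 1) → ℤ) → ℝ)
    (t : ℕ) (x : Fin (d + 1) → ℤ) :
    Matrix {p // p ∈ Sset d t x} {p // p ∈ Sset d t x} ℝ :=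
  fun p q => P p.1.1 p.1.2 (q.1.2 - Pi.single (Fin.last d) (q.1.1 : ℤ))

/-- `N_{t,x} = (W^-_{t,x})⁻¹ W^+_{t,x}`. -/
noncomputable def Nmat {d : ℕ} (P : ℕ → (Fin (d + 1) → ℤ) → (Fin (d + 1) → ℤ) → ℝ)
    (t : ℕ) (x : Fin (d + 1) → ℤ) :
    Matrix {p // p ∈ Sset d t x} {p // p ∈ Sset d t x} ℝ :=
  (Wminus P t x)⁻¹ * Wplus P t x

/-- The extended transform `N f`, vanishing outside `{w : w_d < 0}`, defined at a point
`w = x − t e_d` (with `x ∈ ∂B`, `t ≥ 1`) as the `(t,x)`-component of `N_{t,x}` applied to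
the vector `(f(z + u e_d))_{(u,z) ∈ S(t,x)}`.  (Note that `(t,x) ∈ S(t,x)` always holds
in this situation, so the guard below is satisfied exactly when `w_d < 0`.) -/
noncomputable def Ntrans {d : ℕ} (P : ℕ → (Fin (d + 1) → ℤ) → (Fin (d + 1) → ℤ) → ℝ)
    (f : (Fin (d + 1) → ℤ) → ℝ) : (Fin (d + 1) → ℤ) → ℝ := fun w =>
  if hm : ((-(w (Fin.last d))).toNat, Function.update w (Fin.last d) 0) ∈
      Sset d (-(w (Fin.last d))).toNat (Function.update w (Fin.last d) 0) then
    (Nmat P (-(w (Fin.last d))).toNat (Function.update w (Fin.last d) 0)).mulVec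
      (fun p => f (p.1.2 + Pi.single (Fin.last d) (p.1.1 : ℤ)))
      ⟨((-(w (Fin.last d))).toNat, Function.update w (Fin.last d) 0), hm⟩
  else 0


section Aux

variable {d : ℕ}

lemma norm1_nonneg (v : Fin (d + 1) → ℤ) : 0 ≤ norm1 v :=
  Finset.sum_nonneg fun i _ => abs_nonneg _

lemma norm1_eq_zero {v : Fin (d + 1) → ℤ} (h : norm1 v ≤ 0) : v = 0 := by
  have h0 : norm1 v = 0 := le_antisymm h (norm1_nonneg v)
  funext i
  have := (Finset.sum_eq_zero_iff_of_nonneg (fun i _ => abs_nonneg (v i))).1 h0 i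
    (Finset.mem_univ i)
  simpa using abs_eq_zero.1 this

lemma norm1_add_le (a b : Fin (d + 1) → ℤ) : norm1 (a + b) ≤ norm1 a + norm1 b := by
  rw [norm1, norm1, norm1, ← Finset.sum_add_distrib]
  exact Finset.sum_le_sum fun i _ => abs_add_le _ _

lemma norm1_unitVec (i : Fin (d + 1)) : norm1 (unitVec d i) = 1 := by
  rw [norm1]
  simp_rw [unitVec, Pi.single_apply, apply_ite abs, abs_one, abs_zero]
  simp

lemma norm1_neg (v : Fin (d + 1) → ℤ) : norm1 (-v) = norm1 v := by
  unfold norm1; simp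

lemma support_le {P : ℕ → (Fin (d + 1) → ℤ) → (Fin (d + 1) → ℤ) → ℝ}
    (hP : IsRandomWalk d P) :
    ∀ (t : ℕ) (x z : Fin (d + 1) → ℤ), P t x z ≠ 0 → norm1 (z - x) ≤ (t : ℤ) := by
  intro t
  induction t with
  | zero =>
    intro x z h
    rw [hP.init] at h
    rcases eq_or_ne z x with rfl | hne
    · simp [norm1]
    · simp [hne] at h
  | succ t ih =>
    intro x z h
    by_contra hc
    push_neg at hc
    apply h
    rw [hP.step]
    have key : ∀ (w : Fin (d + 1) → ℤ) (i : Fin (d + 1)),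
        (w = x + unitVec d i ∨ w = x - unitVec d i) → P t w z = 0 := by
      intro w i hw
      by_contra hz
      have h1 := ih w z hz
      have h2 : norm1 (z - x) ≤ (t : ℤ) + 1 := by
        rcases hw with rfl | rfl
        · have : z - x = (z - (x + unitVec d i)) + unitVec d i := by ring
          calc norm1 (z - x) ≤ norm1 (z - (x + unitVec d i)) + norm1 (unitVec d i) := by
                rw [this]; exact norm1_add_le _ _
            _ ≤ (t : ℤ) + 1 := by rw [norm1_unitVec]; linarith
        · have : z - x = (z - (x - unitVec d i)) + (-unitVec d i) := by ring
          calc norm1 (z - x) ≤ norm1 (z - (x - unitVec d i)) + norm1 (-unitVec d i) := by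
                rw [this]; exact norm1_add_le _ _
            _ ≤ (t : ℤ) + 1 := by rw [norm1_neg, norm1_unitVec]; linarith
      have : ((t : ℤ) + 1) < norm1 (z - x) := by push_cast at hc ⊢; linarith
      linarith
    rw [Finset.sum_eq_zero, Finset.sum_eq_zero, add_zero]
    · intro i _; rw [key _ i (Or.inr rfl), mul_zero]
    · intro i _; rw [key _ i (Or.inl rfl), mul_zero]

lemma diag_pos {P : ℕ → (Fin (d + 1) → ℤ) → (Fin (d + 1) → ℤ) → ℝ}
    (hP : IsRandomWalk d P) :
    ∀ (s : ℕ) (y : Fin (d + 1) → ℤ), 0 < P s y (y - Pi.single (Fin.last d) (s : ℤ)) := by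
  intro s
  induction s with
  | zero =>
    intro y
    have : y - Pi.single (Fin.last d) ((0 : ℕ) : ℤ) = y := by simp
    rw [this, hP.init]
    simp
  | succ s ih =>
    intro y
    rw [hP.step]
    set y' := y - unitVec d (Fin.last d) with hy'
    have hz : y - Pi.single (Fin.last d) ((s + 1 : ℕ) : ℤ) =
        y' - Pi.single (Fin.last d) ((s : ℕ) : ℤ) := by
      funext j
      simp only [hy', Pi.sub_apply, unitVec, Pi.single_apply]
      split_ifs <;> push_cast <;> ring
    rw [hz]
    have hterm : 0 < P 1 y y' * P s y' (y' - Pi.single (Fin.last d) ((s : ℕ) : ℤ)) :=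
      mul_pos (hP.pos_sub y (Fin.last d)) (ih y')
    have h2 : P 1 y y' * P s y' (y' - Pi.single (Fin.last d) ((s : ℕ) : ℤ)) ≤
        ∑ i, P 1 y (y - unitVec d i) *
          P s (y - unitVec d i) (y' - Pi.single (Fin.last d) ((s : ℕ) : ℤ)) :=
      Finset.single_le_sum
        (f := fun i => P 1 y (y - unitVec d i) *
          P s (y - unitVec d i) (y' - Pi.single (Fin.last d) ((s : ℕ) : ℤ)))
        (fun i _ => mul_nonneg (hP.nonneg _ _ _) (hP.nonneg _ _ _))
        (Finset.mem_univ (Fin.last d))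
    have h3 : (0:ℝ) ≤ ∑ i, P 1 y (y + unitVec d i) *
        P s (y + unitVec d i) (y' - Pi.single (Fin.last d) ((s : ℕ) : ℤ)) :=
      Finset.sum_nonneg fun i _ => mul_nonneg (hP.nonneg _ _ _) (hP.nonneg _ _ _)
    linarith

lemma norm1_sub_single {v : Fin (d + 1) → ℤ} (hv : v (Fin.last d) = 0) (u : ℕ) :
    norm1 (v - Pi.single (Fin.last d) (u : ℤ)) = (u : ℤ) + norm1 v := by
  have key : ∀ i, |(v - (Pi.single (Fin.last d) ((u : ℤ)) : Fin (d + 1) → ℤ)) i| =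
      |v i| + (Pi.single (Fin.last d) ((u : ℤ)) : Fin (d + 1) → ℤ) i := by
    intro i
    rcases eq_or_ne i (Fin.last d) with rfl | h
    · simp [hv]
    · simp [Pi.single_apply, h]
  rw [norm1, norm1]
  simp_rw [key]
  rw [Finset.sum_add_distrib]
  have : ∑ i, (Pi.single (Fin.last d) ((u : ℤ)) : Fin (d + 1) → ℤ) i = (u : ℤ) := by
    simp
  rw [this, add_comm]

lemma Sset_last {t : ℕ} {x : Fin (d + 1) → ℤ} {p : ℕ × (Fin (d + 1) → ℤ)}
    (hp : p ∈ Sset d t x) : p.2 (Fin.last d) = 0 :=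
  ((Finset.mem_filter.1 hp).2).1

end Aux

section Det

variable {d : ℕ} {P : ℕ → (Fin (d + 1) → ℤ) → (Fin (d + 1) → ℤ) → ℝ}
variable {t : ℕ} {x : Fin (d + 1) → ℤ}

lemma wminus_support (hP : IsRandomWalk d P)
    (p q : {p // p ∈ Sset d t x}) (h : Wminus P t x p q ≠ 0) :
    (q.1.1 : ℤ) + norm1 (q.1.2 - p.1.2) ≤ (p.1.1 : ℤ) := by
  have hs := support_le hP p.1.1 p.1.2 _ h
  have hlast : (q.1.2 - p.1.2) (Fin.last d) = 0 := by
    simp [Pi.sub_apply, Sset_last q.2, Sset_last p.2]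
  have heq : q.1.2 - (Pi.single (Fin.last d) ((q.1.1 : ℤ)) : Fin (d + 1) → ℤ) - p.1.2 =
      (q.1.2 - p.1.2) - (Pi.single (Fin.last d) ((q.1.1 : ℤ)) : Fin (d + 1) → ℤ) := by
    ring
  rw [heq, norm1_sub_single hlast] at hs
  exact hs

lemma wminus_diag_eq (hP : IsRandomWalk d P)
    {σ : Equiv.Perm {p // p ∈ Sset d t x}}
    (hprod : ∀ p, Wminus P t x (σ p) p ≠ 0) : σ = 1 := by
  have hle : ∀ p : {p // p ∈ Sset d t x}, (p.1.1 : ℤ) ≤ ((σ p).1.1 : ℤ) := fun p =>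
    le_trans (le_add_of_nonneg_right (norm1_nonneg _)) (wminus_support hP (σ p) p (hprod p))
  have hsum : ∑ p : {p // p ∈ Sset d t x}, (p.1.1 : ℤ) =
      ∑ p : {p // p ∈ Sset d t x}, ((σ p).1.1 : ℤ) := by
    rw [Equiv.sum_comp σ (fun p => (p.1.1 : ℤ))]
  have heq : ∀ p : {p // p ∈ Sset d t x}, (p.1.1 : ℤ) = ((σ p).1.1 : ℤ) := fun p =>
    (Finset.sum_eq_sum_iff_of_le (fun p _ => hle p)).1 hsum p (Finset.mem_univ p)
  apply Equiv.ext
  intro p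
  show σ p = p
  have h1 := wminus_support hP (σ p) p (hprod p)
  have h2 : norm1 (p.1.2 - (σ p).1.2) ≤ 0 := by
    have := heq p; linarith
  have h3 : p.1.2 = (σ p).1.2 := by
    have := norm1_eq_zero h2
    exact sub_eq_zero.1 this
  have h4 : p.1.1 = (σ p).1.1 := Nat.cast_injective (heq p)
  exact Subtype.ext (Prod.ext h4.symm h3.symm)

lemma det_wminus (hP : IsRandomWalk d P) :
    (Wminus P t x).det = ∏ p : {p // p ∈ Sset d t x}, Wminus P t x p p := by
  rw [Matrix.det_apply]
  rw [Finset.sum_eq_single (1 : Equiv.Perm {p // p ∈ Sset d t x})]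
  · simp
  · intro σ _ hσ
    have hz : ∏ p, Wminus P t x (σ p) p = 0 := by
      by_contra hne
      exact hσ (wminus_diag_eq hP
        (fun p hp0 => hne (Finset.prod_eq_zero (Finset.mem_univ p) hp0)))
    rw [hz, smul_zero]
  · intro h; exact absurd (Finset.mem_univ _) h

lemma det_wminus_pos (hP : IsRandomWalk d P) : 0 < (Wminus P t x).det := by
  rw [det_wminus hP]
  exact Finset.prod_pos fun p _ => by
    have := diag_pos hP p.1.1 p.1.2
    exact this

end Det

lemma nmat_entry {d : ℕ} {P : ℕ → (Fin (d + 1) → ℤ) → (Fin (d + 1) → ℤ) → ℝ}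
    {t : ℕ} {x : Fin (d + 1) → ℤ} (hP : IsRandomWalk d P)
    (i0 q : {p // p ∈ Sset d t x}) :
    Nmat P t x i0 q =
      (∏ p : {p // p ∈ Sset d t x},
          P p.1.1 p.1.2 (p.1.2 - Pi.single (Fin.last d) (p.1.1 : ℤ)))⁻¹ *
        ∑ σ : Equiv.Perm {p // p ∈ Sset d t x},
          ((Equiv.Perm.sign σ : ℤ) : ℝ) *
            (P (σ i0).1.1 (σ i0).1.2 (q.1.2 + Pi.single (Fin.last d) (q.1.1 : ℤ)) *
              ∏ p ∈ Finset.univ.erase i0,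
                P (σ p).1.1 (σ p).1.2 (p.1.2 - Pi.single (Fin.last d) (p.1.1 : ℤ))) := by
  rw [Nmat, Matrix.inv_def, Ring.inverse_eq_inv, Matrix.smul_mul, Matrix.smul_apply,
    smul_eq_mul, det_wminus hP]
  congr 1
  have h1 : ((Wminus P t x).adjugate * Wplus P t x) i0 q =
      ((Wminus P t x).updateCol i0 (fun r => Wplus P t x r q)).det := by
    rw [← Matrix.cramer_apply, Matrix.cramer_eq_adjugate_mulVec, Matrix.mul_apply]
    rfl
  rw [h1, Matrix.det_apply]
  apply Finset.sum_congr rfl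
  intro σ _
  have h2 : ∀ p ∈ Finset.univ.erase i0,
      (Wminus P t x).updateCol i0 (fun r => Wplus P t x r q) (σ p) p =
        P (σ p).1.1 (σ p).1.2 (p.1.2 - Pi.single (Fin.last d) (p.1.1 : ℤ)) := by
    intro p hp
    rw [Matrix.updateCol_apply, if_neg (Finset.ne_of_mem_erase hp)]
    rfl
  rw [← Finset.mul_prod_erase Finset.univ
    (fun p => (Wminus P t x).updateCol i0 (fun r => Wplus P t x r q) (σ p) p)
    (Finset.mem_univ i0), Finset.prod_congr rfl h2,
    Matrix.updateCol_apply, if_pos rfl]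
  simp [Units.smul_def, zsmul_eq_mul, Wplus]


lemma Ntrans_spec {d : ℕ} {P : ℕ → (Fin (d + 1) → ℤ) → (Fin (d + 1) → ℤ) → ℝ}
    {f : (Fin (d + 1) → ℤ) → ℝ} (w : Fin (d + 1) → ℤ) {t : ℕ} {x : Fin (d + 1) → ℤ}
    (ht' : t = (-(w (Fin.last d))).toNat) (hx' : x = Function.update w (Fin.last d) 0)
    (hmem : (t, x) ∈ Sset d t x) :
    Ntrans P f w = (Nmat P t x).mulVec
      (fun p => f (p.1.2 + Pi.single (Fin.last d) (p.1.1 : ℤ))) ⟨(t, x), hmem⟩ := by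
  subst ht' hx'
  exact dif_pos hmem

set_option maxHeartbeats 1600000 in
/-- Explicit form: `N f(x − t e_d) = ∑_{(s,y) ∈ S(t,x)} c_{t,x}(s,y) f(y + s e_d)`
with the explicit coefficients `c_{t,x}(s,y)` given by Cramer's rule. -/
theorem stmt_13 (d : ℕ) (P : ℕ → (Fin (d + 1) → ℤ) → (Fin (d + 1) → ℤ) → ℝ)
    (hP : IsRandomWalk d P) (t : ℕ) (ht : 1 ≤ t)
    (x : Fin (d + 1) → ℤ) (hx : x (Fin.last d) = 0)
    (hmem : (t, x) ∈ Sset d t x)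
    (f : (Fin (d + 1) → ℤ) → ℝ) (hf : ∀ z, z (Fin.last d) ≤ 0 → f z = 0) :
    Ntrans P f (x - Pi.single (Fin.last d) (t : ℤ)) =
      ∑ q : {p // p ∈ Sset d t x},
        ((∏ p : {p // p ∈ Sset d t x},
            P p.1.1 p.1.2 (p.1.2 - Pi.single (Fin.last d) (p.1.1 : ℤ)))⁻¹ *
          ∑ σ : Equiv.Perm {p // p ∈ Sset d t x},
            ((Equiv.Perm.sign σ : ℤ) : ℝ) *
              (P (σ ⟨(t, x), hmem⟩).1.1 (σ ⟨(t, x), hmem⟩).1.2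
                  (q.1.2 + Pi.single (Fin.last d) (q.1.1 : ℤ)) *
                ∏ p ∈ Finset.univ.erase (⟨(t, x), hmem⟩ : {p // p ∈ Sset d t x}),
                  P (σ p).1.1 (σ p).1.2
                    (p.1.2 - Pi.single (Fin.last d) (p.1.1 : ℤ)))) *
          f (q.1.2 + Pi.single (Fin.last d) (q.1.1 : ℤ)) := by
  have hw : (x - Pi.single (Fin.last d) (t : ℤ) : Fin (d + 1) → ℤ) (Fin.last d)
      = -(t : ℤ) := by
    simp [hx]
  have h1 : (-((x - Pi.single (Fin.last d) (t : ℤ) : Fin (d + 1) → ℤ) (Fin.last d))).toNat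
      = t := by
    rw [hw]; simp
  have h2 : Function.update (x - Pi.single (Fin.last d) (t : ℤ)) (Fin.last d) 0 = x := by
    funext i
    rcases eq_or_ne i (Fin.last d) with rfl | h
    · simp [hx]
    · simp [Function.update_apply, h, Pi.single_apply]
  rw [Ntrans_spec _ h1.symm h2.symm hmem]
  simp only [Matrix.mulVec, dotProduct, nmat_entry hP]
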